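/- Let A be the adjacency matrix of a d-regular tree T of height h embedded as a subgraph of a larger vertex set, W the set of non-leaf vertices of T, and L the set of leaves. Then for any real vector f, |fᵀ A f| ≤ 2√(d-1)·Σ_{w∈W} f_w² + √(d-1)·Σ_{v∈L} f_v². -/

import Mathlib

open SimpleGraph Finset

lemma tree_dist_ne {V : Type*} [DecidableEq V] {T : SimpleGraph V} (htree : T.IsTree) (root : V) {u v : V}
    (huv : T.Adj u v) : T.dist root u ≠ T.dist root v := by
  intro heq
  obtain ⟨p, hp, hlen⟩ := (htree.isConnected.preconnected root u).exists_path_of_dist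
  have hvsup : v ∉ p.support := by
    intro hv
    have h1 := p.length_takeUntil_le hv
    have h2 : T.dist root v ≤ (p.takeUntil v hv).length := SimpleGraph.dist_le _
    have h4 := congrArg SimpleGraph.Walk.length (p.take_spec hv)
    rw [SimpleGraph.Walk.length_append] at h4
    have h5 : (p.dropUntil v hv).length = 0 := by omega
    exact huv.ne (SimpleGraph.Walk.eq_of_length_eq_zero h5).symm
  have hqpath : (p.concat huv).IsPath := by
    rw [← SimpleGraph.Walk.isPath_reverse_iff, SimpleGraph.Walk.reverse_concat,
      SimpleGraph.Walk.cons_isPath_iff]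
    refine ⟨hp.reverse, ?_⟩
    simpa using hvsup
  obtain ⟨pv, hpv, hlenv⟩ := (htree.isConnected.preconnected root v).exists_path_of_dist
  have := (htree.existsUnique_path root v).unique hqpath hpv
  have hlq := congrArg SimpleGraph.Walk.length this
  rw [SimpleGraph.Walk.length_concat] at hlq
  omega

lemma tree_parent_unique {V : Type*} [DecidableEq V] {T : SimpleGraph V} (htree : T.IsTree) (root : V)
    {v u₁ u₂ : V} (h₁ : T.Adj v u₁) (h₂ : T.Adj v u₂)
    (hd₁ : T.dist root u₁ < T.dist root v) (hd₂ : T.dist root u₂ < T.dist root v) :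
    u₁ = u₂ := by
  have key : ∀ {u : V} (h : T.Adj v u), T.dist root u < T.dist root v →
      ∃ q : T.Walk root v, q.IsPath ∧ q.reverse.getVert 1 = u := by
    intro u h hd
    obtain ⟨p, hp, hlen⟩ := (htree.isConnected.preconnected root u).exists_path_of_dist
    have hvsup : v ∉ p.support := by
      intro hv
      have h1 := p.length_takeUntil_le hv
      have h2 : T.dist root v ≤ (p.takeUntil v hv).length := SimpleGraph.dist_le _
      omega
    refine ⟨p.concat h.symm, ?_, ?_⟩
    · rw [← SimpleGraph.Walk.isPath_reverse_iff, SimpleGraph.Walk.reverse_concat,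
        SimpleGraph.Walk.cons_isPath_iff]
      refine ⟨hp.reverse, ?_⟩
      simpa using hvsup
    · rw [SimpleGraph.Walk.reverse_concat]
      exact (SimpleGraph.Walk.getVert_cons_succ _ _ (n := 0)).trans (SimpleGraph.Walk.getVert_zero _)
  obtain ⟨q₁, hq₁, hg₁⟩ := key h₁ hd₁
  obtain ⟨q₂, hq₂, hg₂⟩ := key h₂ hd₂
  have : q₁ = q₂ := (htree.existsUnique_path root v).unique hq₁ hq₂
  rw [← hg₁, ← hg₂, this]

lemma amgm2 {s : ℝ} (hs : 0 < s) (x y : ℝ) : x * y ≤ 1/(2*s) * x ^ 2 + s/2 * y ^ 2 := by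
  have h : 1/(2*s) * x ^ 2 + s/2 * y ^ 2 - x * y = (1/(2*s)) * (x - s*y) ^ 2 := by
    field_simp; ring
  nlinarith [mul_nonneg (le_of_lt (by positivity : (0:ℝ) < 1/(2*s))) (sq_nonneg (x - s*y))]

lemma amgm_bound {s : ℝ} (hs : 0 < s) (P : Prop) [Decidable P] (a b : ℝ) :
    |a * b| ≤ (if P then 1/(2*s) else s/2) * a ^ 2 + (if P then s/2 else 1/(2*s)) * b ^ 2 := by
  have h1 : |a * b| = |a| * |b| := abs_mul a b
  by_cases hP : P <;> simp only [hP, if_true, if_false] <;> rw [h1]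
  · have := amgm2 hs |a| |b|
    rw [sq_abs, sq_abs] at this; linarith
  · have := amgm2 hs |b| |a|
    rw [sq_abs, sq_abs] at this; nlinarith [this]

theorem stmt9 {V : Type*} [Fintype V] [DecidableEq V] (T : SimpleGraph V)
    [DecidableRel T.Adj] (d h : ℕ) (hd : 3 ≤ d) (hh : 1 ≤ h) (root : V)
    (htree : T.IsTree)
    (hdepth : ∀ v, T.dist root v ≤ h)
    (hroot : T.degree root = d)
    (hinternal : ∀ v, 0 < T.dist root v → T.dist root v < h → T.degree v = d)
    (hleaf : ∀ v, T.dist root v = h → T.degree v = 1)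
    (f : V → ℝ) :
    |dotProduct f ((T.adjMatrix ℝ).mulVec f)| ≤
      2 * Real.sqrt ((d : ℝ) - 1) *
          ∑ v ∈ Finset.univ.filter (fun v => T.dist root v < h), (f v) ^ 2 +
        Real.sqrt ((d : ℝ) - 1) *
          ∑ v ∈ Finset.univ.filter (fun v => T.dist root v = h), (f v) ^ 2 := by
  classical
  have hdR : (3:ℝ) ≤ (d:ℝ) := by exact_mod_cast hd
  set s := Real.sqrt ((d:ℝ) - 1) with hsdef
  have hd1 : (0:ℝ) ≤ (d:ℝ) - 1 := by linarith
  have hs2 : s ^ 2 = (d:ℝ) - 1 := Real.sq_sqrt hd1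
  have hsnn : 0 ≤ s := Real.sqrt_nonneg _
  have hs1 : 1 ≤ s := by nlinarith
  have hs : 0 < s := lt_of_lt_of_le one_pos hs1
  set A : V → V → ℝ := fun v u => if T.dist root v < T.dist root u then 1/(2*s) else s/2 with hA
  set B : V → V → ℝ := fun v u => if T.dist root v < T.dist root u then s/2 else 1/(2*s) with hB
  -- quadratic form as a double sum over neighbors
  have hQ : dotProduct f ((T.adjMatrix ℝ).mulVec f)
      = ∑ v, ∑ u ∈ T.neighborFinset v, f v * f u := by
    simp [dotProduct, SimpleGraph.adjMatrix_mulVec_apply, Finset.mul_sum]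
  -- symmetry swap
  have hswap : ∀ F : V → V → ℝ,
      ∑ v, ∑ u ∈ T.neighborFinset v, F v u = ∑ v, ∑ u ∈ T.neighborFinset v, F u v := by
    intro F
    simp_rw [neighborFinset_eq_filter, Finset.sum_filter]
    rw [Finset.sum_comm]
    refine Finset.sum_congr rfl fun u _ => Finset.sum_congr rfl fun v _ => ?_
    exact if_congr (T.adj_comm v u) rfl rfl
  -- the combined coefficient for adjacent pairs
  have hAB : ∀ v u, T.Adj v u → A v u + B u v = (if T.dist root v < T.dist root u then 1/s else s) := by
    intro v u hadj
    have hne : T.dist root v ≠ T.dist root u := tree_dist_ne htree root hadj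
    by_cases hlt : T.dist root v < T.dist root u
    · rw [hA, hB]
      simp only [if_pos hlt, if_neg (by omega : ¬ T.dist root u < T.dist root v)]
      field_simp
      norm_num
    · have hlt' : T.dist root u < T.dist root v := by omega
      rw [hA, hB]
      simp only [if_neg hlt, if_pos hlt']
      ring
  -- per-vertex bound on the coefficient sum
  have key : ∀ v, ∑ u ∈ T.neighborFinset v, (A v u + B u v) ≤ (if T.dist root v = h then s else 2*s) := by
    intro v
    have hsum : ∑ u ∈ T.neighborFinset v, (A v u + B u v)
        = ∑ u ∈ T.neighborFinset v, (if T.dist root v < T.dist root u then 1/s else s) := by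
      refine Finset.sum_congr rfl fun u hu => hAB v u ((T.mem_neighborFinset _ _).mp hu)
    rw [hsum]
    have h1s : 1/s ≤ s := by
      rw [div_le_iff₀ hs]; nlinarith
    by_cases hvh : T.dist root v = h
    · rw [if_pos hvh]
      calc ∑ u ∈ T.neighborFinset v, (if T.dist root v < T.dist root u then 1/s else s)
          ≤ (T.neighborFinset v).card • s := by
            refine Finset.sum_le_card_nsmul _ _ s fun u _ => ?_
            split_ifs
            · exact h1s
            · exact le_refl s
        _ = s := by
            rw [card_neighborFinset_eq_degree, hleaf v hvh, one_smul]
    · rw [if_neg hvh]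
      have hvlt : T.dist root v < h := lt_of_le_of_ne (hdepth v) hvh
      have hdeg : T.degree v = d := by
        rcases Nat.eq_zero_or_pos (T.dist root v) with h0 | h0
        · have hre : T.Reachable root v := htree.isConnected.preconnected root v
          have : root = v := by
            rcases (SimpleGraph.dist_eq_zero_iff_eq_or_not_reachable).mp h0 with h | h
            · exact h
            · exact absurd hre h
          rw [← this]; exact hroot
        · exact hinternal v h0 hvlt
      set P := (T.neighborFinset v).filter (fun u => T.dist root u < T.dist root v) with hPdef
      set Q := (T.neighborFinset v).filter (fun u => ¬ T.dist root u < T.dist root v) with hQdef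
      have hPcard : P.card ≤ 1 := by
        rw [Finset.card_le_one]
        intro u1 hu1 u2 hu2
        rw [hPdef, Finset.mem_filter] at hu1 hu2
        exact tree_parent_unique htree root ((T.mem_neighborFinset _ _).mp hu1.1)
          ((T.mem_neighborFinset _ _).mp hu2.1) hu1.2 hu2.2
      have hPQ : P.card + Q.card = d := by
        rw [hPdef, hQdef, Finset.card_filter_add_card_filter_not,
          card_neighborFinset_eq_degree, hdeg]
      have hsplit : ∑ u ∈ T.neighborFinset v, (if T.dist root v < T.dist root u then 1/s else s)
          = ∑ u ∈ P, (if T.dist root v < T.dist root u then 1/s else s)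
            + ∑ u ∈ Q, (if T.dist root v < T.dist root u then 1/s else s) :=
        (Finset.sum_filter_add_sum_filter_not _ _ _).symm
      have hPterm : ∑ u ∈ P, (if T.dist root v < T.dist root u then 1/s else s) = P.card • s := by
        rw [← Finset.sum_const]
        refine Finset.sum_congr rfl fun u hu => ?_
        rw [hPdef, Finset.mem_filter] at hu
        rw [if_neg (by omega : ¬ T.dist root v < T.dist root u)]
      have hQterm : ∑ u ∈ Q, (if T.dist root v < T.dist root u then 1/s else s) = Q.card • (1/s) := by
        rw [← Finset.sum_const]
        refine Finset.sum_congr rfl fun u hu => ?_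
        rw [hQdef, Finset.mem_filter] at hu
        have hadj := (T.mem_neighborFinset _ _).mp hu.1
        have hne : T.dist root v ≠ T.dist root u := tree_dist_ne htree root hadj
        rw [if_pos (by omega : T.dist root v < T.dist root u)]
      rw [hsplit, hPterm, hQterm, nsmul_eq_mul, nsmul_eq_mul]
      have hp1 : (P.card : ℝ) ≤ 1 := by exact_mod_cast hPcard
      have hpq : (P.card : ℝ) + (Q.card : ℝ) = (d : ℝ) := by exact_mod_cast hPQ
      have hp0 : (0:ℝ) ≤ (P.card : ℝ) := Nat.cast_nonneg _
      have hq0 : (0:ℝ) ≤ (Q.card : ℝ) := Nat.cast_nonneg _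
      apply le_of_mul_le_mul_right _ hs
      have hexp : ((P.card : ℝ) * s + (Q.card : ℝ) * (1/s)) * s
          = (P.card : ℝ) * s^2 + (Q.card : ℝ) := by
        have hinv : (1/s) * s = 1 := by rw [one_div, inv_mul_cancel₀ hs.ne']
        linear_combination (Q.card : ℝ) * hinv
      rw [hexp, hs2]
      nlinarith
  -- put everything together
  calc |dotProduct f ((T.adjMatrix ℝ).mulVec f)|
      = |∑ v, ∑ u ∈ T.neighborFinset v, f v * f u| := by rw [hQ]
    _ ≤ ∑ v, |∑ u ∈ T.neighborFinset v, f v * f u| := Finset.abs_sum_le_sum_abs _ _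
    _ ≤ ∑ v, ∑ u ∈ T.neighborFinset v, |f v * f u| :=
        Finset.sum_le_sum fun v _ => Finset.abs_sum_le_sum_abs _ _
    _ ≤ ∑ v, ∑ u ∈ T.neighborFinset v, (A v u * f v ^ 2 + B v u * f u ^ 2) :=
        Finset.sum_le_sum fun v _ => Finset.sum_le_sum fun u _ => amgm_bound hs _ _ _
    _ = ∑ v, ∑ u ∈ T.neighborFinset v, A v u * f v ^ 2
        + ∑ v, ∑ u ∈ T.neighborFinset v, B v u * f u ^ 2 := by
        rw [← Finset.sum_add_distrib]
        exact Finset.sum_congr rfl fun v _ => Finset.sum_add_distrib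
    _ = ∑ v, ∑ u ∈ T.neighborFinset v, A v u * f v ^ 2
        + ∑ v, ∑ u ∈ T.neighborFinset v, B u v * f v ^ 2 := by
        rw [hswap (fun v u => B v u * f u ^ 2)]
    _ = ∑ v, (∑ u ∈ T.neighborFinset v, (A v u + B u v)) * f v ^ 2 := by
        rw [← Finset.sum_add_distrib]
        refine Finset.sum_congr rfl fun v _ => ?_
        rw [Finset.sum_mul, ← Finset.sum_add_distrib]
        exact Finset.sum_congr rfl fun u _ => by ring
    _ ≤ ∑ v, (if T.dist root v = h then s else 2*s) * f v ^ 2 :=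
        Finset.sum_le_sum fun v _ => mul_le_mul_of_nonneg_right (key v) (sq_nonneg _)
    _ = 2 * s * ∑ v ∈ Finset.univ.filter (fun v => T.dist root v < h), (f v) ^ 2
        + s * ∑ v ∈ Finset.univ.filter (fun v => T.dist root v = h), (f v) ^ 2 := by
        rw [← Finset.sum_filter_add_sum_filter_not Finset.univ (fun v => T.dist root v = h)]
        have h1 : ∑ v ∈ Finset.univ.filter (fun v => T.dist root v = h),
            (if T.dist root v = h then s else 2*s) * f v ^ 2
            = s * ∑ v ∈ Finset.univ.filter (fun v => T.dist root v = h), (f v) ^ 2 := by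
          rw [Finset.mul_sum]
          refine Finset.sum_congr rfl fun v hv => ?_
          rw [Finset.mem_filter] at hv
          rw [if_pos hv.2]
        have h2 : ∑ v ∈ Finset.univ.filter (fun v => ¬ T.dist root v = h),
            (if T.dist root v = h then s else 2*s) * f v ^ 2
            = 2 * s * ∑ v ∈ Finset.univ.filter (fun v => T.dist root v < h), (f v) ^ 2 := by
          have hfe : Finset.univ.filter (fun v => ¬ T.dist root v = h)
              = Finset.univ.filter (fun v => T.dist root v < h) := by
            refine Finset.filter_congr fun v _ => ?_
            have := hdepth v
            constructor
            · intro hne; omega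
            · intro hlt; omega
          rw [hfe, Finset.mul_sum]
          refine Finset.sum_congr rfl fun v hv => ?_
          rw [Finset.mem_filter] at hv
          rw [if_neg (by omega : ¬ T.dist root v = h)]
        rw [h1, h2, add_comm]
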